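/- Let (η_n) ⊂ (0,1) satisfy Assumption 1 (decreasing to 0, decreasing increments of η_n^{-1/2}, and non-summable), let θ̃ > 0 and g_{m_1} ≥ 0. Define g_{n+1} = η_{n+1}^{1/2} ( ((1-η_n)^3/η_n) · g_n/(g_n + η_n^{-1/2}) + θ̃^2 ) for n ≥ m_1. Then g_n → θ̃ as n → ∞. -/

import Mathlib

open Filter Real

lemma am_aux_frac_mono {a x y : ℝ} (ha : 0 < a) (hx : 0 ≤ x) (hxy : x ≤ y) :
    x / (1 + a * x) ≤ y / (1 + a * y) := by
  have h1 : 0 < 1 + a * x := by positivity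
  have h2 : 0 < 1 + a * y := by nlinarith
  rw [div_le_div_iff₀ h1 h2]; nlinarith

lemma am_aux_sq_mono {a x y : ℝ} (ha : 0 < a) (hx : 0 ≤ x) (hxy : x ≤ y) :
    a * x ^ 2 / (1 + a * x) ≤ a * y ^ 2 / (1 + a * y) := by
  have h1 : 0 < 1 + a * x := by positivity
  have h2 : 0 < 1 + a * y := by nlinarith
  rw [div_le_div_iff₀ h1 h2]
  nlinarith [mul_nonneg (mul_nonneg ha.le (sub_nonneg.2 hxy)) (add_nonneg hx (hx.trans hxy)),
    mul_nonneg (mul_nonneg (mul_nonneg (mul_nonneg ha.le ha.le) hx) (hx.trans hxy)) (sub_nonneg.2 hxy)]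

lemma am_aux_id {a x : ℝ} (ha : 0 < a) (hx : 0 ≤ x) :
    x / (1 + a * x) = x - a * x ^ 2 / (1 + a * x) := by
  have h1 : 0 < 1 + a * x := by positivity
  field_simp
  ring

set_option maxHeartbeats 2000000 in
lemma am_aux_main (e s h : ℕ → ℝ) (θt : ℝ) (m' m₁ : ℕ)
    (hepos : ∀ n, 0 < e n)
    (hs : ∀ n, s n = (√(e n))⁻¹)
    (hrec : ∀ n ≥ m₁, h (n + 1) = (1 - e n) ^ 3 * (h n / (1 + e n * h n)) + θt ^ 2)
    (helt1 : ∀ n, e n < 1)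
    (hh0 : 0 ≤ h m₁)
    (hdec : ∀ n ≥ m', e (n + 1) ≤ e n)
    (hlim : Tendsto e atTop (nhds 0))
    (hdd : ∀ n ≥ m', s (n + 2) - s (n + 1) ≤ s (n + 1) - s n)
    (hdiv : ¬ Summable e) (hθt : 0 < θt) :
    Tendsto (fun n => h n / s n) atTop (nhds θt) := by
  have hsqpos : ∀ n, 0 < √(e n) := fun n => Real.sqrt_pos.2 (hepos n)
  have hspos : ∀ n, 0 < s n := fun n => by rw [hs n]; exact inv_pos.2 (hsqpos n)
  have hes2 : ∀ n, e n * s n ^ 2 = 1 := by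
    intro n
    rw [hs n, inv_pow, Real.sq_sqrt (hepos n).le]
    exact mul_inv_cancel₀ (hepos n).ne'
  have hes : ∀ n, e n * s n = √(e n) := by
    intro n
    rw [hs n]
    field_simp
    rw [div_eq_iff (hsqpos n).ne']
    exact (Real.mul_self_sqrt (hepos n).le).symm
  -- nonnegativity of h
  have hhnn : ∀ n, m₁ ≤ n → 0 ≤ h n := by
    refine Nat.le_induction hh0 ?_
    intro n hn ih
    rw [hrec n hn]
    have h1 : (0:ℝ) ≤ (1 - e n) ^ 3 := pow_nonneg (by linarith [helt1 n]) 3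
    have h2 : 0 ≤ h n / (1 + e n * h n) :=
      div_nonneg ih (by nlinarith [mul_nonneg (hepos n).le ih])
    nlinarith [mul_nonneg h1 h2, sq_nonneg θt]
  have hlb0 : ∀ n, m₁ ≤ n → θt ^ 2 ≤ h (n + 1) := by
    intro n hn
    rw [hrec n hn]
    have h1 : (0:ℝ) ≤ (1 - e n) ^ 3 := pow_nonneg (by linarith [helt1 n]) 3
    have h2 : 0 ≤ h n / (1 + e n * h n) :=
      div_nonneg (hhnn n hn) (by nlinarith [mul_nonneg (hepos n).le (hhnn n hn)])
    nlinarith [mul_nonneg h1 h2]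
  -- upper and lower recurrence inequalities
  have hUB : ∀ n, m₁ ≤ n → h (n + 1) ≤ h n / (1 + e n * h n) + θt ^ 2 := by
    intro n hn
    rw [hrec n hn]
    have h1 : (1 - e n) ^ 3 ≤ 1 := by
      nlinarith [mul_nonneg (hepos n).le (by nlinarith [sq_nonneg (e n - 3/2)] :
        (0:ℝ) ≤ 3 - 3 * e n + e n ^ 2)]
    have h2 : 0 ≤ h n / (1 + e n * h n) :=
      div_nonneg (hhnn n hn) (by nlinarith [mul_nonneg (hepos n).le (hhnn n hn)])
    nlinarith
  have hLB : ∀ n, m₁ ≤ n → (1 - 3 * e n) * (h n / (1 + e n * h n)) + θt ^ 2 ≤ h (n + 1) := by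
    intro n hn
    rw [hrec n hn]
    have h1 : 1 - 3 * e n ≤ (1 - e n) ^ 3 := by
      nlinarith [mul_nonneg (sq_nonneg (e n)) (by linarith [helt1 n] : (0:ℝ) ≤ 3 - e n)]
    have h2 : 0 ≤ h n / (1 + e n * h n) :=
      div_nonneg (hhnn n hn) (by nlinarith [mul_nonneg (hepos n).le (hhnn n hn)])
    nlinarith
  -- limit facts
  have hsqlim : Tendsto (fun n => √(e n)) atTop (nhds 0) := by
    have := (Real.continuous_sqrt.tendsto 0).comp hlim
    simpa [Function.comp_def] using this
  have hslim : Tendsto s atTop atTop := by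
    refine Tendsto.congr (fun n => (hs n).symm) ?_
    exact (tendsto_nhdsWithin_of_tendsto_nhds_of_eventually_within _ hsqlim
      (Eventually.of_forall fun n => hsqpos n)).inv_tendsto_nhdsGT_zero
  have hd_anti : ∀ a b, m' ≤ a → a ≤ b → s (b + 1) - s b ≤ s (a + 1) - s a := by
    intro a b ha hab
    induction b, hab using Nat.le_induction with
    | base => exact le_refl _
    | succ b hab ih => exact le_trans (hdd b (ha.trans hab)) ih
  have hmono_s : ∀ n, m' ≤ n → s n ≤ s (n + 1) := by
    intro n hn
    rw [hs n, hs (n + 1)]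
    exact inv_anti₀ (hsqpos (n + 1)) (Real.sqrt_le_sqrt (hdec n hn))
  -- the increments of s tend to zero
  have hd0 : ∀ ε : ℝ, 0 < ε → ∃ N, m' ≤ N ∧ ∀ n, N ≤ n → s (n + 1) - s n ≤ ε := by
    intro ε hε
    by_contra hcon
    push_neg at hcon
    have hall : ∀ n, m' ≤ n → ε ≤ s (n + 1) - s n := by
      intro n hn
      obtain ⟨m, hm1, hm2⟩ := hcon n hn
      exact le_trans hm2.le (hd_anti n m hn hm1)
    have hgrow : ∀ n, m' ≤ n → s m' + ε * ((n : ℝ) - m') ≤ s n := by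
      refine Nat.le_induction (by simp) ?_
      intro n hn ih
      have h1 := hall n hn
      push_cast at ih ⊢
      linarith
    apply hdiv
    apply (summable_nat_add_iff (m' + 1)).1
    have hsum : Summable (fun n : ℕ => ε⁻¹ ^ 2 * (1 / ((n : ℝ) + 1) ^ 2)) := by
      apply Summable.mul_left
      have := (summable_nat_add_iff 1).2 ((Real.summable_one_div_nat_pow (p := 2)).2 (by norm_num))
      simpa using this
    refine Summable.of_nonneg_of_le (fun n => (hepos _).le) (fun n => ?_) hsum
    have hb : ε * ((n : ℝ) + 1) ≤ s (n + (m' + 1)) := by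
      have h1 := hgrow (n + (m' + 1)) (by omega)
      have h0 : 0 < s m' := hspos m'
      push_cast at h1 ⊢
      linarith
    have hb0 : 0 < ε * ((n : ℝ) + 1) := by positivity
    have hk := hes2 (n + (m' + 1))
    have hsk := hspos (n + (m' + 1))
    have key : e (n + (m' + 1)) * (ε * ((n : ℝ) + 1)) ^ 2 ≤ 1 := by
      nlinarith [mul_nonneg (hepos (n + (m' + 1))).le
        (by nlinarith : (0:ℝ) ≤ s (n + (m' + 1)) ^ 2 - (ε * ((n : ℝ) + 1)) ^ 2)]
    have heq : ε⁻¹ ^ 2 * (1 / ((n : ℝ) + 1) ^ 2) = 1 / (ε * ((n : ℝ) + 1)) ^ 2 := by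
      field_simp
    rw [heq, le_div_iff₀ (by positivity)]
    exact key
  -- sublinear growth of s
  have hsbound : ∀ N : ℕ, ∀ ε : ℝ, 0 ≤ ε → (∀ n, N ≤ n → s (n + 1) - s n ≤ ε) →
      ∀ n, N ≤ n → s n ≤ s N + ε * ((n : ℝ) - N) := by
    intro N ε hε hd
    refine Nat.le_induction (by simp) ?_
    intro n hn ih
    have h1 := hd n hn
    push_cast at ih ⊢
    linarith
  -- value identity
  have hval : ∀ (n : ℕ) (c : ℝ), 0 < c →
      e n * (c * s n) ^ 2 / (1 + e n * (c * s n)) = c ^ 2 / (1 + c * √(e n)) := by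
    intro n c hc
    have h1 : e n * (c * s n) ^ 2 = c ^ 2 := by linear_combination c ^ 2 * hes2 n
    have h2 : 1 + e n * (c * s n) = 1 + c * √(e n) := by linear_combination c * hes n
    rw [h1, h2]
  -- UPPER BOUND
  have hupper : ∀ c : ℝ, θt < c → ∃ N, ∀ n, N ≤ n → h n ≤ c * s n := by
    intro c hc
    have hc0 : 0 < c := hθt.trans hc
    set δ := (c ^ 2 - θt ^ 2) / 2 with hδdef
    have hδ0 : 0 < δ := by rw [hδdef]; nlinarith
    have hA0 : 0 < δ / (c * (θt ^ 2 + δ)) := by positivity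
    obtain ⟨N₁, hN₁⟩ := eventually_atTop.1 (hsqlim.eventually (gt_mem_nhds hA0))
    set N₀ := max N₁ (max m' (m₁ + 1)) with hN₀def
    have hm1N : m₁ + 1 ≤ N₀ := le_trans (le_max_right m' (m₁ + 1)) (le_max_right N₁ _)
    have hm'N : m' ≤ N₀ := le_trans (le_max_left m' (m₁ + 1)) (le_max_right N₁ _)
    have hN₁N : N₁ ≤ N₀ := le_max_left _ _
    have hkey : ∀ n, N₀ ≤ n → θt ^ 2 + δ ≤ c ^ 2 / (1 + c * √(e n)) := by
      intro n hn
      have h1 : √(e n) < δ / (c * (θt ^ 2 + δ)) := hN₁ n (le_trans hN₁N hn)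
      have hsq0 := (hsqpos n).le
      have h2 : (0:ℝ) < 1 + c * √(e n) := by positivity
      rw [le_div_iff₀ h2]
      rw [lt_div_iff₀ (by positivity)] at h1
      nlinarith
    have stepA : ∀ n, N₀ ≤ n → c * s n ≤ h n → h (n + 1) ≤ h n - δ := by
      intro n hn hcs
      have hm : m₁ ≤ n := by omega
      have hub := hUB n hm
      have hid := am_aux_id (hepos n) (hhnn n hm)
      have hmono := am_aux_sq_mono (hepos n) (mul_nonneg hc0.le (hspos n).le) hcs
      rw [hval n c hc0] at hmono
      have hk := hkey n hn
      linarith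
    have stepB : ∀ n, N₀ ≤ n → h n ≤ c * s n → h (n + 1) ≤ c * s (n + 1) := by
      intro n hn hcs
      have hm : m₁ ≤ n := by omega
      have hm' : m' ≤ n := by omega
      have hub := hUB n hm
      have hmono := am_aux_frac_mono (hepos n) (hhnn n hm) hcs
      have hid := am_aux_id (hepos n) (mul_nonneg hc0.le (hspos n).le)
      rw [hid, hval n c hc0] at hmono
      have hk := hkey n hn
      have hss' : c * s n ≤ c * s (n + 1) :=
        mul_le_mul_of_nonneg_left (hmono_s n hm') hc0.le
      linarith
    have hentry : ∃ N₂, N₀ ≤ N₂ ∧ h N₂ ≤ c * s N₂ := by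
      by_contra hcon
      push_neg at hcon
      have hdesc : ∀ k : ℕ, h (N₀ + k) ≤ h N₀ - k * δ := by
        intro k
        induction k with
        | zero => simp
        | succ k ih =>
          have h1 := stepA (N₀ + k) (by omega) (hcon (N₀ + k) (by omega)).le
          have h2 : N₀ + (k + 1) = (N₀ + k) + 1 := rfl
          rw [h2]
          push_cast
          push_cast at ih
          linarith
      obtain ⟨k, hk⟩ := exists_nat_gt (h N₀ / δ)
      have h2 := hdesc k
      rw [div_lt_iff₀ hδ0] at hk
      have h4 : 0 ≤ h (N₀ + k) := hhnn _ (by omega)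
      linarith
    obtain ⟨N₂, hN₂, hN₂le⟩ := hentry
    exact ⟨N₂, Nat.le_induction hN₂le (fun n hn ih => stepB n (le_trans hN₂ hn) ih)⟩
  -- LOWER BOUND
  have hlower : ∀ c : ℝ, 0 < c → c < θt → ∃ N, ∀ n, N ≤ n → c * s n ≤ h n := by
    intro c hc0 hcθ
    set δ := (θt ^ 2 - c ^ 2) / 2 with hδdef
    have hδ0 : 0 < δ := by rw [hδdef]; nlinarith
    have h2δ : θt ^ 2 - c ^ 2 = 2 * δ := by rw [hδdef]; ring
    have hev1 : ∀ᶠ n in atTop, √(e n) < δ / (3 * c) :=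
      hsqlim.eventually (gt_mem_nhds (by positivity))
    have hev2 : ∀ᶠ n in atTop, e n < 1 / 3 :=
      hlim.eventually (gt_mem_nhds (by norm_num))
    obtain ⟨N₁, hN₁⟩ := eventually_atTop.1 (hev1.and hev2)
    obtain ⟨Nd, hNdm', hNd⟩ := hd0 (δ / (2 * c)) (by positivity)
    set N₀ := max (max N₁ Nd) (max m' (m₁ + 1)) with hN₀def
    have hm1N : m₁ + 1 ≤ N₀ := le_trans (le_max_right m' (m₁ + 1)) (le_max_right _ _)
    have hm'N : m' ≤ N₀ := le_trans (le_max_left m' (m₁ + 1)) (le_max_right _ _)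
    have hN₁N : N₁ ≤ N₀ := le_trans (le_max_left N₁ Nd) (le_max_left _ _)
    have hNdN : Nd ≤ N₀ := le_trans (le_max_right N₁ Nd) (le_max_left _ _)
    have hδc : ∀ n, N₀ ≤ n → 3 * (c * √(e n)) ≤ δ := by
      intro n hn
      have hsq : √(e n) ≤ δ / (3 * c) := (hN₁ n (by omega)).1.le
      rw [le_div_iff₀ (by positivity)] at hsq
      linarith
    have stepA : ∀ n, N₀ ≤ n → h n ≤ c * s n → h n + δ ≤ h (n + 1) := by
      intro n hn hcs
      have hm : m₁ ≤ n := by omega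
      have hlb := hLB n hm
      have hid := am_aux_id (hepos n) (hhnn n hm)
      have hnum : (0:ℝ) ≤ e n * h n ^ 2 := mul_nonneg (hepos n).le (sq_nonneg _)
      have hden : (1:ℝ) ≤ 1 + e n * h n := by
        linarith [mul_nonneg (hepos n).le (hhnn n hm)]
      have hY0 : 0 ≤ e n * h n ^ 2 / (1 + e n * h n) := div_nonneg hnum (by linarith)
      have hY1 : e n * h n ^ 2 / (1 + e n * h n) ≤ e n * h n ^ 2 := div_le_self hnum hden
      have hcsq : e n * (c * s n) ^ 2 = c ^ 2 := by linear_combination c ^ 2 * hes2 n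
      have hY2 : e n * h n ^ 2 ≤ c ^ 2 := by
        have hp : (0:ℝ) ≤ e n * ((c * s n - h n) * (c * s n + h n)) :=
          mul_nonneg (hepos n).le (mul_nonneg (sub_nonneg.2 hcs)
            (add_nonneg (mul_nonneg hc0.le (hspos n).le) (hhnn n hm)))
        linarith [hp, hcsq]
      have hesn : e n * (c * s n) = c * √(e n) := by linear_combination c * hes n
      have hY3 : e n * h n ≤ c * √(e n) := by
        have := mul_le_mul_of_nonneg_left hcs (hepos n).le
        linarith
      have hXle : h n / (1 + e n * h n) ≤ h n := by linarith
      have heX : e n * (h n / (1 + e n * h n)) ≤ e n * h n :=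
        mul_le_mul_of_nonneg_left hXle (hepos n).le
      have hmain : h n - c ^ 2 - 3 * (c * √(e n)) ≤ (1 - 3 * e n) * (h n / (1 + e n * h n)) := by
        linarith [hid, heX, hY1, hY2, hY3]
      have hd1 := hδc n hn
      linarith
    have stepB : ∀ n, N₀ ≤ n → c * s n ≤ h n → c * s (n + 1) ≤ h (n + 1) := by
      intro n hn hcs
      have hm : m₁ ≤ n := by omega
      have hlb := hLB n hm
      have he3 : e n ≤ 1 / 3 := (hN₁ n (by omega)).2.le
      have hcs0 : (0:ℝ) ≤ c * s n := mul_nonneg hc0.le (hspos n).le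
      have hmono := am_aux_frac_mono (hepos n) hcs0 hcs
      have hid := am_aux_id (hepos n) hcs0
      have hcsq : e n * (c * s n) ^ 2 = c ^ 2 := by linear_combination c ^ 2 * hes2 n
      have hnum : (0:ℝ) ≤ e n * (c * s n) ^ 2 := mul_nonneg (hepos n).le (sq_nonneg _)
      have hden : (1:ℝ) ≤ 1 + e n * (c * s n) := by
        linarith [mul_nonneg (hepos n).le hcs0]
      have hv0 : 0 ≤ e n * (c * s n) ^ 2 / (1 + e n * (c * s n)) :=
        div_nonneg hnum (by linarith)
      have hv1 : e n * (c * s n) ^ 2 / (1 + e n * (c * s n)) ≤ c ^ 2 := by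
        have h2 := div_le_self hnum hden
        linarith
      have hWle : c * s n / (1 + e n * (c * s n)) ≤ c * s n := by linarith
      have heW : e n * (c * s n / (1 + e n * (c * s n))) ≤ e n * (c * s n) :=
        mul_le_mul_of_nonneg_left hWle (hepos n).le
      have hesn : e n * (c * s n) = c * √(e n) := by linear_combination c * hes n
      have h13 : (0:ℝ) ≤ 1 - 3 * e n := by linarith
      have hmul : (1 - 3 * e n) * (c * s n / (1 + e n * (c * s n)))
          ≤ (1 - 3 * e n) * (h n / (1 + e n * h n)) := mul_le_mul_of_nonneg_left hmono h13
      have hmain : c * s n - c ^ 2 - 3 * (c * √(e n))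
          ≤ (1 - 3 * e n) * (c * s n / (1 + e n * (c * s n))) := by
        linarith [hid, heW, hesn, hv1]
      have hd1 := hδc n hn
      have hdn : s (n + 1) - s n ≤ δ / (2 * c) := hNd n (by omega)
      have hcd : c * (s (n + 1) - s n) ≤ δ / 2 := by
        have h2 := mul_le_mul_of_nonneg_left hdn hc0.le
        have h3 : c * (δ / (2 * c)) = δ / 2 := by field_simp
        linarith
      linarith [hlb, hmul, hmain, hd1, hcd, h2δ]
    have hentry : ∃ N₂, N₀ ≤ N₂ ∧ c * s N₂ ≤ h N₂ := by
      by_contra hcon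
      push_neg at hcon
      have hup : ∀ k : ℕ, h N₀ + k * δ ≤ h (N₀ + k) := by
        intro k
        induction k with
        | zero => simp
        | succ k ih =>
          have h1 := stepA (N₀ + k) (by omega) (hcon (N₀ + k) (by omega)).le
          have h2 : N₀ + (k + 1) = (N₀ + k) + 1 := rfl
          rw [h2]
          push_cast
          push_cast at ih
          linarith
      have hsb := hsbound N₀ (δ / (2 * c)) (by positivity) (fun n hn => hNd n (by omega))
      obtain ⟨k, hk⟩ := exists_nat_gt (c * s N₀ * 2 / δ)
      rw [div_lt_iff₀ hδ0] at hk
      have h1 := hup k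
      have h2 := hcon (N₀ + k) (by omega)
      have h3 := hsb (N₀ + k) (by omega)
      have h4 := hhnn N₀ (by omega)
      push_cast at h3
      have h5 := mul_le_mul_of_nonneg_left h3 hc0.le
      have h6 : c * (s N₀ + δ / (2 * c) * ((N₀:ℝ) + k - N₀)) = c * s N₀ + k * δ / 2 := by
        field_simp
        ring
      rw [h6] at h5
      linarith
    obtain ⟨N₂, hN₂, hN₂le⟩ := hentry
    exact ⟨N₂, Nat.le_induction hN₂le (fun n hn ih => stepB n (le_trans hN₂ hn) ih)⟩
  -- CONCLUSION
  refine tendsto_order.2 ⟨?_, ?_⟩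
  · intro b hb
    have h0 : max b 0 < θt := max_lt hb hθt
    have hc0 : 0 < (max b 0 + θt) / 2 := by
      have := le_max_right b 0
      linarith
    have hcθ : (max b 0 + θt) / 2 < θt := by linarith
    have hbc : b < (max b 0 + θt) / 2 := by
      have := le_max_left b 0
      linarith
    obtain ⟨N, hN⟩ := hlower _ hc0 hcθ
    filter_upwards [eventually_ge_atTop N] with n hn
    have h1 := hN n hn
    have h2 : (max b 0 + θt) / 2 ≤ h n / s n := (le_div_iff₀ (hspos n)).2 (by linarith)
    linarith
  · intro b hb
    obtain ⟨N, hN⟩ := hupper ((θt + b) / 2) (by linarith)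
    filter_upwards [eventually_ge_atTop N] with n hn
    have h1 := hN n hn
    have h2 : h n / s n ≤ (θt + b) / 2 := (div_le_iff₀ (hspos n)).2 (by linarith)
    linarith


/-- Under Assumption 1 on the weights `(η n)` (decreasing to zero from `m'`,
decreasing increments of `η n ^ (-1/2)`, non-summable), the sequence
`g (n+1) = √(η (n+1)) * ((1-η n)^3/η n * g n/(g n + η n ^ (-1/2)) + θ̃^2)`
with `g m₁ ≥ 0` converges to `θ̃`. -/
theorem am_growth_rate_limit (η g : ℕ → ℝ) (θt : ℝ) (m' m₁ : ℕ)
    (hη : ∀ n, 0 < η n ∧ η n < 1)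
    (hdec : ∀ n ≥ m', η (n + 1) ≤ η n)
    (hlim : Filter.Tendsto η Filter.atTop (nhds 0))
    (hdiffdec : ∀ n ≥ m',
      η (n + 2) ^ (-(1/2 : ℝ)) - η (n + 1) ^ (-(1/2 : ℝ))
        ≤ η (n + 1) ^ (-(1/2 : ℝ)) - η n ^ (-(1/2 : ℝ)))
    (hdiv : ¬ Summable η)
    (hθt : 0 < θt)
    (hg0 : 0 ≤ g m₁)
    (hgrec : ∀ n ≥ m₁,
      g (n + 1) = η (n + 1) ^ ((1:ℝ)/2)
        * ((1 - η n) ^ 3 / η n * (g n / (g n + η n ^ (-(1/2) : ℝ))) + θt ^ 2)) :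
    Filter.Tendsto g Filter.atTop (nhds θt) := by
  have hpos : ∀ n, 0 < η n := fun n => (hη n).1
  have hlt1 : ∀ n, η n < 1 := fun n => (hη n).2
  have hsqpos : ∀ n, 0 < √(η n) := fun n => Real.sqrt_pos.2 (hpos n)
  have hrpow : ∀ n, η n ^ (-(1/2) : ℝ) = (√(η n))⁻¹ := by
    intro n
    rw [Real.sqrt_eq_rpow, ← Real.rpow_neg (hpos n).le]
  have hrpow2 : ∀ n, η n ^ ((1:ℝ)/2) = √(η n) := fun n => (Real.sqrt_eq_rpow _).symm
  have hgnn : ∀ n, m₁ ≤ n → 0 ≤ g n := by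
    refine Nat.le_induction hg0 ?_
    intro n hn ih
    rw [hgrec n hn]
    have h1 : (0:ℝ) ≤ (1 - η n) ^ 3 := pow_nonneg (by linarith [hlt1 n]) 3
    have h2 : 0 ≤ g n / (g n + η n ^ (-(1/2) : ℝ)) := by
      rw [hrpow n]
      exact div_nonneg ih (add_nonneg ih (inv_pos.2 (hsqpos n)).le)
    have h3 : (0:ℝ) ≤ η (n + 1) ^ ((1:ℝ)/2) := Real.rpow_nonneg (hpos (n + 1)).le _
    have h4 : 0 ≤ (1 - η n) ^ 3 / η n := div_nonneg h1 (hpos n).le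
    exact mul_nonneg h3 (add_nonneg (mul_nonneg h4 h2) (sq_nonneg θt))
  have hrec : ∀ n, n ≥ m₁ → g (n + 1) * (√(η (n + 1)))⁻¹ =
      (1 - η n) ^ 3 * ((g n * (√(η n))⁻¹) / (1 + η n * (g n * (√(η n))⁻¹))) + θt ^ 2 := by
    intro n hn
    have hsn : 0 < (√(η n))⁻¹ := inv_pos.2 (hsqpos n)
    have hgn := hgnn n hn
    rw [hgrec n hn, hrpow2, hrpow n, mul_right_comm,
      mul_inv_cancel₀ (hsqpos (n + 1)).ne', one_mul]
    congr 1
    have hmul : √(η n) * √(η n) = η n := Real.mul_self_sqrt (hpos n).le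
    rw [← hmul]
    have ht0 := hsqpos n
    have hd1 : 0 < g n + (√(η n))⁻¹ := by positivity
    have hd2 : (0:ℝ) < 1 + √(η n) * √(η n) * (g n * (√(η n))⁻¹) := by
      have h5 : √(η n) * √(η n) * (g n * (√(η n))⁻¹) = √(η n) * g n := by
        field_simp
      rw [h5]
      have := mul_nonneg ht0.le hgn
      linarith
    rw [Real.sqrt_mul_self ht0.le]
    field_simp
    ring
  have hdd : ∀ n, n ≥ m' → (√(η (n + 2)))⁻¹ - (√(η (n + 1)))⁻¹
      ≤ (√(η (n + 1)))⁻¹ - (√(η n))⁻¹ := by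
    intro n hn
    have := hdiffdec n hn
    rwa [hrpow, hrpow, hrpow] at this
  have hmain := am_aux_main η (fun n => (√(η n))⁻¹) (fun n => g n * (√(η n))⁻¹) θt m' m₁
    hpos (fun n => rfl) hrec hlt1 (mul_nonneg hg0 (inv_pos.2 (hsqpos m₁)).le)
    hdec hlim hdd hdiv hθt
  exact hmain.congr fun n => mul_div_cancel_right₀ (g n) (inv_ne_zero (hsqpos n).ne')
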